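/- If W is the minimal witness of (V, σ), then every morphism of representations from W to the quotient V/W is zero, i.e. Hom_Q(W, V/W) = 0. -/

import Mathlib

open Module

/-- A family of subspaces `W x ⊆ ℂ^{α x}` is a subrepresentation of the
representation `M` of the quiver with vertices `Vt`, arrows `At`,
head map `hd`, tail map `tl`, if it is stable under all arrow maps. -/
def IsSubrep {Vt At : Type} (hd tl : At → Vt) (α : Vt → ℕ)
    (M : ∀ a : At, Matrix (Fin (α (hd a))) (Fin (α (tl a))) ℂ)
    (W : ∀ x : Vt, Submodule ℂ (Fin (α x) → ℂ)) : Prop :=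
  ∀ a : At, ∀ v ∈ W (tl a), (M a).mulVec v ∈ W (hd a)

/-- `σ(dim W) = ∑ x σ(x) dim W(x)`. -/
noncomputable def sval {Vt : Type} [Fintype Vt] (α : Vt → ℕ) (σ : Vt → ℤ)
    (W : ∀ x : Vt, Submodule ℂ (Fin (α x) → ℂ)) : ℤ :=
  ∑ x, σ x * (Module.finrank ℂ (W x) : ℤ)

/-- A witness of `(V,σ)` : a subrepresentation maximizing `σ(dim ·)`
(i.e. attaining the discrepancy). -/
def IsWitness {Vt At : Type} [Fintype Vt] (hd tl : At → Vt) (α : Vt → ℕ)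
    (M : ∀ a : At, Matrix (Fin (α (hd a))) (Fin (α (tl a))) ℂ) (σ : Vt → ℤ)
    (W : ∀ x : Vt, Submodule ℂ (Fin (α x) → ℂ)) : Prop :=
  IsSubrep hd tl α M W ∧
    ∀ W', IsSubrep hd tl α M W' → sval α σ W' ≤ sval α σ W

set_option maxHeartbeats 1000000 in
set_option synthInstance.maxHeartbeats 1000000 in
/-- If `W` is the minimal witness of `(V,σ)` then every morphism of
representations `W → V/W` is zero, i.e. `Hom_Q(W, V/W) = 0`. -/
theorem hom_minimal_witness_quotient_eq_zero {Vt At : Type} [Fintype Vt] [Fintype At]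
    (hd tl : At → Vt) (α : Vt → ℕ)
    (M : ∀ a : At, Matrix (Fin (α (hd a))) (Fin (α (tl a))) ℂ) (σ : Vt → ℤ)
    (W : ∀ x : Vt, Submodule ℂ (Fin (α x) → ℂ))
    (hwit : IsWitness hd tl α M σ W)
    (hmin : ∀ W', IsWitness hd tl α M σ W' → ∀ x, W x ≤ W' x)
    (φ : ∀ x : Vt, W x →ₗ[ℂ] ((Fin (α x) → ℂ) ⧸ W x))
    (hφ : ∀ a : At, ∀ v : W (tl a),
      φ (hd a) ⟨(M a).mulVec v, hwit.1 a v v.2⟩ =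
        Submodule.mapQ (W (tl a)) (W (hd a)) (M a).mulVecLin
          (fun u hu => hwit.1 a u hu) (φ (tl a) v)) :
    ∀ x, φ x = 0 := by
  classical
  set K : ∀ x : Vt, Submodule ℂ (Fin (α x) → ℂ) :=
    fun x => (LinearMap.ker (φ x)).map (W x).subtype with hKdef
  set X : ∀ x : Vt, Submodule ℂ (Fin (α x) → ℂ) :=
    fun x => (LinearMap.range (φ x)).comap (W x).mkQ with hXdef
  have hKsub : IsSubrep hd tl α M K := by
    intro a v hv
    obtain ⟨w, hw, rfl⟩ := hv
    refine ⟨⟨(M a).mulVec w, hwit.1 a w w.2⟩, ?_, rfl⟩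
    show φ (hd a) ⟨(M a).mulVec (w : Fin (α (tl a)) → ℂ), hwit.1 a w w.2⟩ = 0
    rw [hφ a w, show φ (tl a) w = 0 from hw, map_zero]
  have hXsub : IsSubrep hd tl α M X := by
    intro a v hv
    simp only [hXdef, Submodule.mem_comap, LinearMap.mem_range] at hv ⊢
    obtain ⟨w, hw⟩ := hv
    refine ⟨⟨(M a).mulVec w, hwit.1 a w w.2⟩, ?_⟩
    rw [hφ a w, hw]
    simp [Submodule.mkQ_apply, Submodule.mapQ_apply, Matrix.mulVecLin_apply]
    rfl
  have hWX : ∀ x, W x ≤ X x := by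
    intro x v hv
    simp only [hXdef, Submodule.mem_comap, LinearMap.mem_range, Submodule.mkQ_apply]
    exact ⟨0, by simp [(Submodule.Quotient.mk_eq_zero _).2 hv]⟩
  have hdimK : ∀ x, (finrank ℂ (K x) : ℤ) +
      (finrank ℂ (LinearMap.range (φ x)) : ℤ) = (finrank ℂ (W x) : ℤ) := by
    intro x
    have h1 : finrank ℂ (K x) = finrank ℂ (LinearMap.ker (φ x)) :=
      (Submodule.equivMapOfInjective _ (W x).injective_subtype _).symm.finrank_eq
    have h2 := LinearMap.finrank_range_add_finrank_ker (φ x)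
    rw [h1]
    omega
  have hdimX : ∀ x, (finrank ℂ (X x) : ℤ) =
      (finrank ℂ (W x) : ℤ) + (finrank ℂ (LinearMap.range (φ x)) : ℤ) := by
    intro x
    have h2 := LinearMap.finrank_range_add_finrank_ker ((W x).mkQ.domRestrict (X x))
    have hker : LinearMap.ker ((W x).mkQ.domRestrict (X x)) =
        Submodule.comap (X x).subtype (W x) := by
      rw [LinearMap.ker_domRestrict, Submodule.ker_mkQ]
    have hrange : LinearMap.range ((W x).mkQ.domRestrict (X x)) =
        LinearMap.range (φ x) := by
      rw [LinearMap.range_domRestrict, hXdef]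
      rw [Submodule.map_comap_eq, Submodule.range_mkQ, top_inf_eq]
    rw [hker, hrange] at h2
    have h3 : finrank ℂ (Submodule.comap (X x).subtype (W x)) = finrank ℂ (W x) :=
      (Submodule.comapSubtypeEquivOfLe (hWX x)).finrank_eq
    rw [h3] at h2
    omega
  have hXle := hwit.2 X hXsub
  have hsum : ∑ x, σ x * (finrank ℂ (LinearMap.range (φ x)) : ℤ) ≤ 0 := by
    have : sval α σ X = sval α σ W +
        ∑ x, σ x * (finrank ℂ (LinearMap.range (φ x)) : ℤ) := by
      unfold sval
      rw [← Finset.sum_add_distrib]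
      refine Finset.sum_congr rfl fun x _ => ?_
      rw [hdimX x]; ring
    omega
  have hKge : sval α σ W ≤ sval α σ K := by
    have : sval α σ K = sval α σ W -
        ∑ x, σ x * (finrank ℂ (LinearMap.range (φ x)) : ℤ) := by
      unfold sval
      rw [eq_sub_iff_add_eq, ← Finset.sum_add_distrib]
      refine Finset.sum_congr rfl fun x _ => ?_
      rw [← hdimK x]; ring
    omega
  have hKwit : IsWitness hd tl α M σ K :=
    ⟨hKsub, fun W' hW' => le_trans (hwit.2 W' hW') hKge⟩
  have hWK := hmin K hKwit
  intro x
  ext v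
  have hv : (v : Fin (α x) → ℂ) ∈ K x := hWK x v.2
  obtain ⟨w, hw, hwv⟩ := hv
  have : w = v := Subtype.ext hwv
  rw [← this]
  simpa using hw
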